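/- arXiv:2304.09400 — 4 statements merged into one kernel-verified Lean document; each statement's English description precedes it below -/
import Mathlib

section
/- Let σ > 0 and c ≥ 0. Let Θ be uniformly distributed on [−π, π), let Z ~ CN(0, σ²), and assume Θ and Z are independent. Then the complex random variable W = c·e^{iΘ} + Z has a density with respect to Lebesgue measure on ℂ ≅ ℝ², given by p(w) = (1/(πσ²)) · exp(−(|w|² + c²)/σ²) · I₀(2|w|c/σ²). -/
open MeasureTheory ProbabilityTheory Real ENNReal

/-- The modified Bessel function of the first kind of order zero:
`I₀(x) = (1/(2π)) ∫_{−π}^{π} e^{x cos θ} dθ`. -/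
noncomputable def I0 (x : ℝ) : ℝ := (1 / (2 * π)) * ∫ θ in (-π)..π, Real.exp (x * Real.cos θ)

lemma gauss_pdf_prod {σ : ℝ} (hσ : 0 < σ) (x y : ℝ) :
    gaussianPDF 0 (Real.toNNReal (σ ^ 2 / 2)) x * gaussianPDF 0 (Real.toNNReal (σ ^ 2 / 2)) y
      = ENNReal.ofReal ((1 / (π * σ ^ 2)) * Real.exp (-(x ^ 2 + y ^ 2) / σ ^ 2)) := by
  have hσ2 : (0:ℝ) < σ ^ 2 := by positivity
  have hv : ((Real.toNNReal (σ ^ 2 / 2)) : ℝ) = σ ^ 2 / 2 := Real.coe_toNNReal _ (by positivity)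
  rw [gaussianPDF, gaussianPDF, gaussianPDFReal, gaussianPDFReal,
    ← ENNReal.ofReal_mul (by positivity)]
  congr 1
  rw [hv]
  have h2v : 2 * (σ ^ 2 / 2 : ℝ) = σ ^ 2 := by ring
  have hs : (2 * π * (σ ^ 2 / 2) : ℝ) = π * σ ^ 2 := by ring
  rw [hs]
  have hsqrt : (√(π * σ ^ 2))⁻¹ * (√(π * σ ^ 2))⁻¹ = (π * σ ^ 2)⁻¹ := by
    rw [← mul_inv, Real.mul_self_sqrt (by positivity)]
  rw [sub_zero, sub_zero, show ∀ a b c d : ℝ, a * b * (c * d) = (a * c) * (b * d) by intros; ring,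
    hsqrt, ← Real.exp_add, one_div]
  congr 1
  rw [h2v]
  ring

lemma map_equiv_withDensity {α β : Type*} [MeasurableSpace α] [MeasurableSpace β]
    (e : α ≃ᵐ β) {μ : Measure α} {ν : Measure β} (hp : MeasurePreserving e μ ν)
    (g : β → ℝ≥0∞) (hg : Measurable g) :
    (μ.withDensity (fun a => g (e a))).map e = ν.withDensity g := by
  ext s hs
  rw [Measure.map_apply e.measurable hs, withDensity_apply _ (e.measurable hs),
    withDensity_apply _ hs]
  exact hp.setLIntegral_comp_preimage hs hg

lemma law_Z {Ω : Type*} [MeasurableSpace Ω] (μ : Measure Ω) [IsProbabilityMeasure μ]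
    {σ : ℝ} (hσ : 0 < σ) (Z : Ω → ℂ) (hZm : Measurable Z)
    (hZre : μ.map (fun ω => (Z ω).re) = gaussianReal 0 (Real.toNNReal (σ ^ 2 / 2)))
    (hZim : μ.map (fun ω => (Z ω).im) = gaussianReal 0 (Real.toNNReal (σ ^ 2 / 2)))
    (hZind : IndepFun (fun ω => (Z ω).re) (fun ω => (Z ω).im) μ) :
    μ.map Z = volume.withDensity
      (fun z => ENNReal.ofReal ((1 / (π * σ ^ 2)) * Real.exp (-(‖z‖ ^ 2) / σ ^ 2))) := by
  set v := Real.toNNReal (σ ^ 2 / 2) with hvdef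
  have hv : v ≠ 0 := by
    simp only [hvdef, ne_eq, Real.toNNReal_eq_zero, not_le]
    positivity
  set g : ℂ → ℝ≥0∞ :=
    fun z => ENNReal.ofReal ((1 / (π * σ ^ 2)) * Real.exp (-(‖z‖ ^ 2) / σ ^ 2))
    with hgdef
  have hgm : Measurable g := by
    refine Measurable.ennreal_ofReal ?_
    exact (continuous_const.mul
      (Real.continuous_exp.comp ((continuous_norm.pow 2).neg.div_const _))).measurable
  have hpair := (indepFun_iff_map_prod_eq_prod_map_map
      (f := fun ω => (Z ω).re) (g := fun ω => (Z ω).im) (μ := μ)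
      (Complex.measurable_re.comp hZm).aemeasurable
      (Complex.measurable_im.comp hZm).aemeasurable).mp hZind
  rw [hZre, hZim] at hpair
  have hprod : (gaussianReal 0 v).prod (gaussianReal 0 v)
      = (volume : Measure (ℝ × ℝ)).withDensity
          (fun p => gaussianPDF 0 v p.1 * gaussianPDF 0 v p.2) := by
    refine Measure.prod_eq fun s t hs ht => ?_
    rw [withDensity_apply _ (hs.prod ht), Measure.volume_eq_prod, ← Measure.prod_restrict,
      lintegral_prod_mul ((measurable_gaussianPDF 0 v).aemeasurable)
        ((measurable_gaussianPDF 0 v).aemeasurable),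
      gaussianReal_apply _ hv s, gaussianReal_apply _ hv t]
  -- Z = e.symm ∘ (re, im)
  have hZeq : Z = fun ω => Complex.measurableEquivRealProd.symm ((Z ω).re, (Z ω).im) := by
    funext ω
    exact (Complex.measurableEquivRealProd.symm_apply_apply (Z ω)).symm
  have hdens : (fun p : ℝ × ℝ => gaussianPDF 0 v p.1 * gaussianPDF 0 v p.2)
      = fun p : ℝ × ℝ => g (Complex.measurableEquivRealProd.symm p) := by
    funext p
    rw [hgdef]
    simp only [Complex.measurableEquivRealProd_symm_apply]
    rw [gauss_pdf_prod hσ]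
    congr 2
    simp only [Complex.sq_norm, Complex.normSq_apply]
    ring_nf
  have hstep : μ.map Z = Measure.map (⇑Complex.measurableEquivRealProd.symm)
      (μ.map (fun ω => ((Z ω).re, (Z ω).im))) := by
    conv_lhs => rw [hZeq]
    exact (Measure.map_map Complex.measurableEquivRealProd.symm.measurable
      ((Complex.measurable_re.comp hZm).prodMk (Complex.measurable_im.comp hZm))).symm
  rw [hstep, hpair, hprod, hdens]
  exact map_equiv_withDensity _ Complex.volume_preserving_equiv_real_prod.symm g hgm

lemma key_integral (σ c : ℝ) (hσ : 0 < σ) (w : ℂ) :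
    (1 / (2 * π)) * ∫ θ in (-π)..π, (1 / (π * σ ^ 2))
        * Real.exp (-(‖w - ↑c * Complex.exp (↑θ * Complex.I)‖ ^ 2) / σ ^ 2)
      = (1 / (π * σ ^ 2)) * Real.exp (-(‖w‖ ^ 2 + c ^ 2) / σ ^ 2)
        * I0 (2 * ‖w‖ * c / σ ^ 2) := by
  set r := ‖w‖ with hr
  set φ := Complex.arg w with hφ
  set B := 2 * r * c / σ ^ 2 with hB
  set K := (1 / (π * σ ^ 2)) with hK
  set E := Real.exp (-(r ^ 2 + c ^ 2) / σ ^ 2) with hE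
  have habs : ∀ θ : ℝ, ‖w - ↑c * Complex.exp (↑θ * Complex.I)‖ ^ 2
      = r ^ 2 + c ^ 2 - 2 * c * r * Real.cos (θ - φ) := by
    intro θ
    have h1 := Complex.norm_mul_cos_arg w
    have h2 := Complex.norm_mul_sin_arg w
    rw [Real.cos_sub, Complex.sq_norm, Complex.normSq_apply]
    simp only [Complex.sub_re, Complex.sub_im, Complex.mul_re, Complex.mul_im,
      Complex.ofReal_re, Complex.ofReal_im, Complex.exp_ofReal_mul_I_re,
      Complex.exp_ofReal_mul_I_im, hr, Complex.sq_norm w, Complex.normSq_apply]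
    rw [← hφ] at h1 h2
    linear_combination c ^ 2 * Real.sin_sq_add_cos_sq θ + (2 * c * Real.cos θ) * h1 + (2 * c * Real.sin θ) * h2
  have hintg : ∀ θ : ℝ, K * Real.exp (-(‖w - ↑c * Complex.exp (↑θ * Complex.I)‖ ^ 2) / σ ^ 2)
      = (K * E) * Real.exp (B * Real.cos (θ - φ)) := by
    intro θ
    rw [habs θ, hE, hB]
    have hexp : -(r ^ 2 + c ^ 2 - 2 * c * r * Real.cos (θ - φ)) / σ ^ 2
        = -(r ^ 2 + c ^ 2) / σ ^ 2 + (2 * r * c / σ ^ 2) * Real.cos (θ - φ) := by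
      field_simp
      ring
    rw [hexp, Real.exp_add]
    ring
  rw [intervalIntegral.integral_congr (g := fun θ => (K * E) * Real.exp (B * Real.cos (θ - φ)))
    (fun θ _ => hintg θ), intervalIntegral.integral_const_mul]
  have hper : Function.Periodic (fun θ : ℝ => Real.exp (B * Real.cos θ)) (2 * π) := by
    intro x
    simp [Real.cos_add_two_pi]
  have hshift : (∫ θ in (-π)..π, Real.exp (B * Real.cos (θ - φ)))
      = ∫ θ in (-π)..π, Real.exp (B * Real.cos θ) := by
    rw [intervalIntegral.integral_comp_sub_right (fun θ => Real.exp (B * Real.cos θ)) φ]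
    calc (∫ θ in (-π - φ)..(π - φ), Real.exp (B * Real.cos θ))
        = ∫ θ in (-π - φ)..((-π - φ) + 2 * π), Real.exp (B * Real.cos θ) := by
          rw [show (π - φ : ℝ) = -π - φ + 2 * π by ring]
      _ = ∫ θ in (-π)..((-π) + 2 * π), Real.exp (B * Real.cos θ) :=
          hper.intervalIntegral_add_eq (-π - φ) (-π)
      _ = ∫ θ in (-π)..π, Real.exp (B * Real.cos θ) := by rw [show (-π + 2 * π : ℝ) = π by ring]
  rw [hshift, I0]
  have hBc : B = 2 * r * c / σ ^ 2 := hB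
  ring

/-- If `Θ` is uniform on `[−π, π)`, `Z ~ CN(0, σ²)` (i.e. its real and imaginary parts are
independent `N(0, σ²/2)` Gaussians), and `Θ` and `Z` are independent, then
`W = c·e^{iΘ} + Z` has density `w ↦ (1/(πσ²))·exp(−(|w|²+c²)/σ²)·I₀(2|w|c/σ²)` with respect
to Lebesgue measure on `ℂ`. -/
theorem stmt2 {Ω : Type*} [MeasurableSpace Ω] (μ : Measure Ω) [IsProbabilityMeasure μ]
    (σ c : ℝ) (hσ : 0 < σ) (hc : 0 ≤ c)
    (Θ : Ω → ℝ) (Z : Ω → ℂ) (hΘm : Measurable Θ) (hZm : Measurable Z)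
    (hΘ : μ.map Θ = (ENNReal.ofReal (2 * π))⁻¹ • volume.restrict (Set.Ico (-π) π))
    (hZre : μ.map (fun ω => (Z ω).re) = gaussianReal 0 (Real.toNNReal (σ ^ 2 / 2)))
    (hZim : μ.map (fun ω => (Z ω).im) = gaussianReal 0 (Real.toNNReal (σ ^ 2 / 2)))
    (hZind : IndepFun (fun ω => (Z ω).re) (fun ω => (Z ω).im) μ)
    (hind : IndepFun Θ Z μ) :
    μ.map (fun ω => (c : ℂ) * Complex.exp ((Θ ω : ℂ) * Complex.I) + Z ω)
      = volume.withDensity (fun w => ENNReal.ofReal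
          ((1 / (π * σ ^ 2)) * Real.exp (-(‖w‖ ^ 2 + c ^ 2) / σ ^ 2)
            * I0 (2 * ‖w‖ * c / σ ^ 2))) := by
  have hπ : 0 < π := Real.pi_pos
  have hgDc : Continuous (fun z : ℂ => (1 / (π * σ ^ 2)) * Real.exp (-(‖z‖ ^ 2) / σ ^ 2)) :=
    continuous_const.mul (Real.continuous_exp.comp ((continuous_norm.pow 2).neg.div_const _))
  set gZ : ℂ → ℝ≥0∞ :=
    fun z => ENNReal.ofReal ((1 / (π * σ ^ 2)) * Real.exp (-(‖z‖ ^ 2) / σ ^ 2)) with hgZ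
  have hgZm : Measurable gZ := hgDc.measurable.ennreal_ofReal
  have hlawZ : μ.map Z = volume.withDensity gZ := law_Z μ hσ Z hZm hZre hZim hZind
  set F : ℝ × ℂ → ℂ := fun p => ↑c * Complex.exp (↑p.1 * Complex.I) + p.2 with hF
  have hFc : Continuous F := by fun_prop
  have hpair : μ.map (fun ω => (Θ ω, Z ω)) = (μ.map Θ).prod (μ.map Z) :=
    (indepFun_iff_map_prod_eq_prod_map_map hΘm.aemeasurable hZm.aemeasurable).mp hind
  have hmapW : μ.map (fun ω => (c : ℂ) * Complex.exp ((Θ ω : ℂ) * Complex.I) + Z ω)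
      = ((μ.map Θ).prod (volume.withDensity gZ)).map F := by
    rw [← hlawZ, ← hpair, Measure.map_map hFc.measurable (hΘm.prodMk hZm)]
    rfl
  have hPZ : IsProbabilityMeasure (volume.withDensity gZ) := by
    rw [← hlawZ]; exact Measure.isProbabilityMeasure_map hZm.aemeasurable
  have hPΘ : IsProbabilityMeasure (μ.map Θ) := Measure.isProbabilityMeasure_map hΘm.aemeasurable
  rw [hmapW]
  ext s hs
  rw [Measure.map_apply hFc.measurable hs, Measure.prod_apply (hFc.measurable hs),
    withDensity_apply _ hs]
  have hsec : ∀ θ : ℝ, (volume.withDensity gZ) (Prod.mk θ ⁻¹' (F ⁻¹' s))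
      = ∫⁻ w in s, gZ (w - ↑c * Complex.exp (↑θ * Complex.I)) := by
    intro θ
    set a : ℂ := ↑c * Complex.exp (↑θ * Complex.I) with ha
    have hpre : Prod.mk θ ⁻¹' (F ⁻¹' s) = (fun z : ℂ => a + z) ⁻¹' s := rfl
    have hmp : MeasurePreserving (fun z : ℂ => a + z) volume volume :=
      measurePreserving_add_left volume a
    rw [hpre, withDensity_apply _ (hmp.measurable hs)]
    have := hmp.setLIntegral_comp_preimage hs
      (f := fun w => gZ (w - a)) (hgZm.comp (measurable_id.sub_const a))
    simpa using this
  rw [lintegral_congr hsec]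
  have hswap : ∫⁻ θ, (∫⁻ w in s, gZ (w - ↑c * Complex.exp (↑θ * Complex.I))) ∂(μ.map Θ)
      = ∫⁻ w in s, (∫⁻ θ, gZ (w - ↑c * Complex.exp (↑θ * Complex.I)) ∂(μ.map Θ)) ∂volume := by
    refine lintegral_lintegral_swap ?_
    refine (Measurable.aemeasurable ?_)
    exact hgZm.comp (measurable_snd.sub (by fun_prop))
  rw [hswap]
  refine lintegral_congr fun w => ?_
  rw [hΘ, lintegral_smul_measure]
  have hcont : Continuous fun θ : ℝ => (1 / (π * σ ^ 2))
      * Real.exp (-(‖w - ↑c * Complex.exp (↑θ * Complex.I)‖ ^ 2) / σ ^ 2) :=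
    hgDc.comp (continuous_const.sub (by fun_prop))
  have hnn : ∀ θ : ℝ, 0 ≤ (1 / (π * σ ^ 2))
      * Real.exp (-(‖w - ↑c * Complex.exp (↑θ * Complex.I)‖ ^ 2) / σ ^ 2) := by
    intro θ
    positivity
  have hint : IntegrableOn (fun θ : ℝ => (1 / (π * σ ^ 2))
      * Real.exp (-(‖w - ↑c * Complex.exp (↑θ * Complex.I)‖ ^ 2) / σ ^ 2))
      (Set.Ico (-π) π) volume :=
    (hcont.integrableOn_Icc (a := -π) (b := π)).mono_set Set.Ico_subset_Icc_self
  have h1 : (∫⁻ θ in Set.Ico (-π) π, gZ (w - ↑c * Complex.exp (↑θ * Complex.I)))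
      = ENNReal.ofReal (∫ θ in Set.Ico (-π) π, (1 / (π * σ ^ 2))
          * Real.exp (-(‖w - ↑c * Complex.exp (↑θ * Complex.I)‖ ^ 2) / σ ^ 2)) := by
    rw [hgZ]
    exact (ofReal_integral_eq_lintegral_ofReal hint (ae_of_all _ hnn)).symm
  rw [h1]
  have h2 : (∫ θ in Set.Ico (-π) π, (1 / (π * σ ^ 2))
        * Real.exp (-(‖w - ↑c * Complex.exp (↑θ * Complex.I)‖ ^ 2) / σ ^ 2))
      = ∫ θ in (-π)..π, (1 / (π * σ ^ 2))
        * Real.exp (-(‖w - ↑c * Complex.exp (↑θ * Complex.I)‖ ^ 2) / σ ^ 2) := by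
    rw [MeasureTheory.integral_Ico_eq_integral_Ioo,
      intervalIntegral.integral_of_le (by linarith : (-π : ℝ) ≤ π),
      MeasureTheory.integral_Ioc_eq_integral_Ioo]
  rw [h2, ← ENNReal.ofReal_inv_of_pos (by positivity : (0:ℝ) < 2 * π), smul_eq_mul,
    ← ENNReal.ofReal_mul (by positivity : (0:ℝ) ≤ (2 * π)⁻¹)]
  congr 1
  rw [← key_integral σ c hσ w]
  ring
end

section
/- Let σ > 0 and c ≥ 0. Let Θ be uniformly distributed on [−π, π), let Z ~ CN(0, σ²), and assume Θ and Z are independent. Then the modulus |W| of W = c·e^{iΘ} + Z has density on (0, ∞), with respect to Lebesgue measure, given by r ↦ (2r/σ²) · exp(−(r² + c²)/σ²) · I₀(2rc/σ²). -/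
open MeasureTheory ProbabilityTheory Real ENNReal

lemma I0_continuous : Continuous I0 := by
  have : Continuous fun x : ℝ => ∫ θ in (-π)..π, Real.exp (x * Real.cos θ) := by
    apply intervalIntegral.continuous_parametric_intervalIntegral_of_continuous'
    exact Real.continuous_exp.comp (continuous_fst.mul (Real.continuous_cos.comp continuous_snd))
  exact continuous_const.mul this

lemma I0_nonneg (k : ℝ) : 0 ≤ I0 k := by
  apply mul_nonneg
  · positivity
  · exact intervalIntegral.integral_nonneg (by linarith [Real.pi_pos])
      (fun x _ => (Real.exp_pos _).le)

theorem lintegral_comp_polarCoord_symm' (f : ℝ × ℝ → ℝ≥0∞) :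
    (∫⁻ p in polarCoord.target, ENNReal.ofReal p.1 * f (polarCoord.symm p)) = ∫⁻ p, f p := by
  set B : ℝ × ℝ → ℝ × ℝ →L[ℝ] ℝ × ℝ := fun p =>
    LinearMap.toContinuousLinearMap (Matrix.toLin (Module.Basis.finTwoProd ℝ) (Module.Basis.finTwoProd ℝ)
      !![cos p.2, -p.1 * sin p.2; sin p.2, p.1 * cos p.2])
  have A : ∀ p ∈ polarCoord.target, HasFDerivWithinAt polarCoord.symm (B p) polarCoord.target p :=
    fun p _ => (hasFDerivAt_polarCoord_symm p).hasFDerivWithinAt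
  have B_det : ∀ p, (B p).det = p.1 := by
    intro p
    conv_rhs => rw [← one_mul p.1, ← cos_sq_add_sin_sq p.2]
    simp only [B, neg_mul, LinearMap.det_toContinuousLinearMap, LinearMap.det_toLin,
      Matrix.det_fin_two_of, sub_neg_eq_add]
    ring
  symm
  calc
    ∫⁻ p, f p = ∫⁻ p in polarCoord.source, f p := by
      rw [← setLIntegral_univ]
      exact setLIntegral_congr polarCoord_source_ae_eq_univ.symm
    _ = ∫⁻ p in polarCoord.symm '' polarCoord.target, f p := by
      rw [polarCoord.symm_image_target_eq_source]
    _ = ∫⁻ p in polarCoord.target, ENNReal.ofReal |(B p).det| * f (polarCoord.symm p) := by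
      exact lintegral_image_eq_lintegral_abs_det_fderiv_mul volume
        polarCoord.open_target.measurableSet A polarCoord.symm.injOn f
    _ = _ := by
      refine setLIntegral_congr_fun polarCoord.open_target.measurableSet
        (fun x hx => ?_)
      rw [B_det, abs_of_pos hx.1]

lemma angular (k φ : ℝ) :
    ∫⁻ θ in Set.Ico (-π) π, ENNReal.ofReal (Real.exp (k * Real.cos (φ - θ)))
      = ENNReal.ofReal (2 * π * I0 k) := by
  have cont : Continuous fun θ : ℝ => Real.exp (k * Real.cos (φ - θ)) := by continuity
  have hint : IntegrableOn (fun θ : ℝ => Real.exp (k * Real.cos (φ - θ)))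
      (Set.Ico (-π) π) volume :=
    (cont.continuousOn.integrableOn_compact isCompact_Icc).mono_set Set.Ico_subset_Icc_self
  rw [← MeasureTheory.ofReal_integral_eq_lintegral_ofReal hint
      (Filter.Eventually.of_forall fun x => (Real.exp_pos _).le)]
  congr 1
  have per : Function.Periodic (fun u : ℝ => Real.exp (k * Real.cos u)) (2 * π) :=
    fun x => by simp [Real.cos_add_two_pi]
  have h1 : ∫ θ in Set.Ico (-π) π, Real.exp (k * Real.cos (φ - θ))
      = ∫ θ in (-π)..π, Real.exp (k * Real.cos (φ - θ)) := by
    rw [intervalIntegral.integral_of_le (by linarith [pi_pos]),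
      MeasureTheory.integral_Ico_eq_integral_Ioo, MeasureTheory.integral_Ioc_eq_integral_Ioo]
  rw [h1, intervalIntegral.integral_comp_sub_left (fun u => Real.exp (k * Real.cos u)) φ]
  have h2 : ∫ u in (φ - π)..(φ + π), Real.exp (k * Real.cos u)
      = ∫ u in (-π)..π, Real.exp (k * Real.cos u) := by
    have := per.intervalIntegral_add_eq (φ - π) (-π)
    rw [show φ - π + 2 * π = φ + π by ring, show -π + 2 * π = π by ring] at this
    exact this
  rw [show φ - -π = φ + π by ring, h2, I0]
  field_simp

lemma gauss_prod (σ : ℝ) (hσ : 0 < σ) (c r θ φ : ℝ) :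
    gaussianPDFReal 0 (Real.toNNReal (σ ^ 2 / 2)) (r * Real.cos φ - c * Real.cos θ) *
      gaussianPDFReal 0 (Real.toNNReal (σ ^ 2 / 2)) (r * Real.sin φ - c * Real.sin θ)
      = (π * σ ^ 2)⁻¹ * Real.exp (-(r ^ 2 + c ^ 2) / σ ^ 2) *
        Real.exp (2 * r * c / σ ^ 2 * Real.cos (φ - θ)) := by
  have hv : ((Real.toNNReal (σ ^ 2 / 2)) : ℝ) = σ ^ 2 / 2 :=
    Real.coe_toNNReal _ (by positivity)
  have key : (r * Real.cos φ - c * Real.cos θ) ^ 2 + (r * Real.sin φ - c * Real.sin θ) ^ 2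
      = r ^ 2 + c ^ 2 - 2 * r * c * Real.cos (φ - θ) := by
    rw [Real.cos_sub]
    have h1 := Real.sin_sq_add_cos_sq φ
    have h2 := Real.sin_sq_add_cos_sq θ
    linear_combination r ^ 2 * h1 + c ^ 2 * h2
  simp only [gaussianPDFReal, hv, sub_zero]
  rw [mul_mul_mul_comm, ← Real.exp_add]
  have hA : (√(2 * π * (σ ^ 2 / 2)))⁻¹ * (√(2 * π * (σ ^ 2 / 2)))⁻¹ = (π * σ ^ 2)⁻¹ := by
    rw [← mul_inv, Real.mul_self_sqrt (by positivity)]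
    ring_nf
  rw [hA, mul_assoc, ← Real.exp_add]
  congr 2
  have hσ2 : (σ : ℝ) ^ 2 ≠ 0 := by positivity
  field_simp
  linear_combination -key

/-- If `Θ` is uniform on `[−π, π)`, `Z ~ CN(0, σ²)`, and `Θ` and `Z` are independent, then
the modulus of `W = c·e^{iΘ} + Z` has density
`r ↦ (2r/σ²)·exp(−(r²+c²)/σ²)·I₀(2rc/σ²)` on `(0, ∞)` with respect to Lebesgue measure. -/
theorem stmt3 {Ω : Type*} [MeasurableSpace Ω] (μ : Measure Ω) [IsProbabilityMeasure μ]
    (σ c : ℝ) (hσ : 0 < σ) (hc : 0 ≤ c)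
    (Θ : Ω → ℝ) (Z : Ω → ℂ) (hΘm : Measurable Θ) (hZm : Measurable Z)
    (hΘ : μ.map Θ = (ENNReal.ofReal (2 * π))⁻¹ • volume.restrict (Set.Ico (-π) π))
    (hZre : μ.map (fun ω => (Z ω).re) = gaussianReal 0 (Real.toNNReal (σ ^ 2 / 2)))
    (hZim : μ.map (fun ω => (Z ω).im) = gaussianReal 0 (Real.toNNReal (σ ^ 2 / 2)))
    (hZind : IndepFun (fun ω => (Z ω).re) (fun ω => (Z ω).im) μ)
    (hind : IndepFun Θ Z μ) :
    μ.map (fun ω => ‖(c : ℂ) * Complex.exp ((Θ ω : ℂ) * Complex.I) + Z ω‖)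
      = (volume.restrict (Set.Ioi (0:ℝ))).withDensity (fun r => ENNReal.ofReal
          ((2 * r / σ ^ 2) * Real.exp (-(r ^ 2 + c ^ 2) / σ ^ 2) * I0 (2 * r * c / σ ^ 2))) := by
  classical
  have hπ : (0:ℝ) < π := Real.pi_pos
  have h2π : (0:ℝ) < 2 * π := by linarith
  have hσ2 : (σ:ℝ) ^ 2 ≠ 0 := by positivity
  set v : NNReal := Real.toNNReal (σ ^ 2 / 2) with hvdef
  have hv0 : v ≠ 0 := by
    simp only [hvdef, ne_eq, Real.toNNReal_eq_zero, not_le]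
    positivity
  set G : ℝ → ℝ≥0∞ := gaussianPDF 0 v with hGdef
  have hGmeas : Measurable G := measurable_gaussianPDF 0 v
  have hγ : gaussianReal 0 v = volume.withDensity G := gaussianReal_of_var_ne_zero 0 hv0
  set e : ℝ × ℝ → ℂ := fun p => (p.1 : ℂ) + (p.2 : ℂ) * Complex.I with hedef
  have hecont : Continuous e := by
    exact (Complex.continuous_ofReal.comp continuous_fst).add
      ((Complex.continuous_ofReal.comp continuous_snd).mul continuous_const)
  set φf : ℝ × ℂ → ℝ :=
    fun q => ‖(c : ℂ) * Complex.exp ((q.1 : ℂ) * Complex.I) + q.2‖ with hφdef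
  have hφcont : Continuous φf := by
    apply continuous_norm.comp
    exact (continuous_const.mul (Complex.continuous_exp.comp
      ((Complex.continuous_ofReal.comp continuous_fst).mul continuous_const))).add continuous_snd
  have hφmeas : Measurable φf := hφcont.measurable
  have hDmeas : Measurable fun p : ℝ × ℝ => G p.1 * G p.2 :=
    (hGmeas.comp measurable_fst).mul (hGmeas.comp measurable_snd)
  have hprodwd : (gaussianReal 0 v).prod (gaussianReal 0 v)
      = (volume : Measure (ℝ × ℝ)).withDensity fun p => G p.1 * G p.2 := by
    rw [Measure.volume_eq_prod]
    refine Measure.prod_eq fun s t hs' ht' => ?_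
    rw [withDensity_apply _ (hs'.prod ht'), ← Measure.prod_restrict,
      lintegral_prod_mul hGmeas.aemeasurable hGmeas.aemeasurable,
      hγ, withDensity_apply _ hs', withDensity_apply _ ht']
  -- joint laws
  have hZrm : Measurable fun ω => (Z ω).re := Complex.measurable_re.comp hZm
  have hZimm : Measurable fun ω => (Z ω).im := Complex.measurable_im.comp hZm
  have hZprod : μ.map (fun ω => ((Z ω).re, (Z ω).im))
      = (gaussianReal 0 v).prod (gaussianReal 0 v) := by
    exact ((indepFun_iff_map_prod_eq_prod_map_map hZrm.aemeasurable
      hZimm.aemeasurable).mp hZind).trans (by rw [hZre, hZim])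
  have hZmap : μ.map Z = ((gaussianReal 0 v).prod (gaussianReal 0 v)).map e := by
    have hcomp : Z = e ∘ fun ω => ((Z ω).re, (Z ω).im) := by
      funext ω
      simp [hedef, Complex.re_add_im]
    conv_lhs => rw [hcomp]
    rw [← Measure.map_map hecont.measurable (hZrm.prodMk hZimm), hZprod]
  have hmain : μ.map (fun ω => ‖(c : ℂ) * Complex.exp ((Θ ω : ℂ) * Complex.I) + Z ω‖)
      = (((ENNReal.ofReal (2 * π))⁻¹ • volume.restrict (Set.Ico (-π) π)).prod
          (((gaussianReal 0 v).prod (gaussianReal 0 v)).map e)).map φf := by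
    have h1 : (fun ω => ‖(c : ℂ) * Complex.exp ((Θ ω : ℂ) * Complex.I) + Z ω‖)
        = φf ∘ fun ω => (Θ ω, Z ω) := rfl
    rw [h1, ← Measure.map_map hφmeas (hΘm.prodMk hZm),
      (indepFun_iff_map_prod_eq_prod_map_map hΘm.aemeasurable hZm.aemeasurable).mp hind,
      hΘ, hZmap]
  rw [hmain]
  haveI : IsProbabilityMeasure (((gaussianReal 0 v).prod (gaussianReal 0 v)).map e) :=
    Measure.isProbabilityMeasure_map hecont.measurable.aemeasurable
  -- abs computation
  have habs : ∀ (θ : ℝ) (p : ℝ × ℝ), φf (θ, e p)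
      = Real.sqrt ((p.1 + c * Real.cos θ) ^ 2 + (p.2 + c * Real.sin θ) ^ 2) := by
    intro θ p
    simp only [hφdef, hedef]
    rw [Complex.norm_def, Complex.normSq_apply]
    have hre : ((c:ℂ) * Complex.exp ((θ:ℂ) * Complex.I) + ((p.1:ℂ) + (p.2:ℂ) * Complex.I)).re
        = p.1 + c * Real.cos θ := by
      simp [Complex.exp_ofReal_mul_I_re, Complex.exp_ofReal_mul_I_im]
      ring
    have him : ((c:ℂ) * Complex.exp ((θ:ℂ) * Complex.I) + ((p.1:ℂ) + (p.2:ℂ) * Complex.I)).im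
        = p.2 + c * Real.sin θ := by
      simp [Complex.exp_ofReal_mul_I_re, Complex.exp_ofReal_mul_I_im]
      ring
    rw [hre, him]
    ring_nf
  refine Measure.ext fun s hs => ?_
  rw [Measure.map_apply hφmeas hs, ← lintegral_indicator_one (hφmeas hs)]
  set ind : ℝ → ℝ≥0∞ := s.indicator 1 with hinddef
  have hindmeas : Measurable ind := measurable_one.indicator hs
  have hindcomp : ((φf ⁻¹' s).indicator (1 : ℝ × ℂ → ℝ≥0∞)) = fun q => ind (φf q) := by
    funext q
    by_cases h : φf q ∈ s
    · simp [hinddef, Set.indicator_of_mem, h]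
    · simp [hinddef, Set.indicator_of_notMem, h]
  rw [hindcomp, lintegral_prod (fun q => ind (φf q)) ((hindmeas.comp hφmeas).aemeasurable), lintegral_smul_measure]
  set J : ℝ → ℝ × ℝ → ℝ≥0∞ := fun θ q =>
    G (q.1 - c * Real.cos θ) * G (q.2 - c * Real.sin θ)
      * ind (Real.sqrt (q.1 ^ 2 + q.2 ^ 2)) with hJdef
  have hIθ : ∀ θ : ℝ,
      (∫⁻ z, ind (φf (θ, z)) ∂(((gaussianReal 0 v).prod (gaussianReal 0 v)).map e))
      = ∫⁻ x in polarCoord.target, ENNReal.ofReal x.1 *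
          (G (x.1 * Real.cos x.2 - c * Real.cos θ) * G (x.1 * Real.sin x.2 - c * Real.sin θ)
            * ind x.1) := by
    intro θ
    rw [lintegral_map (show Measurable fun z : ℂ => ind (φf (θ, z)) from
        hindmeas.comp (hφmeas.comp measurable_prodMk_left)) hecont.measurable,
      hprodwd, lintegral_withDensity_eq_lintegral_mul _ hDmeas
        (show Measurable fun p : ℝ × ℝ => ind (φf (θ, e p)) from
          hindmeas.comp (hφmeas.comp (measurable_const.prodMk hecont.measurable)))]
    have hpt : ∀ p : ℝ × ℝ,
        ((fun p : ℝ × ℝ => G p.1 * G p.2) * fun p => ind (φf (θ, e p))) p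
          = J θ (p + (c * Real.cos θ, c * Real.sin θ)) := by
      intro p
      simp only [Pi.mul_apply, hJdef, Prod.fst_add, Prod.snd_add, add_sub_cancel_right,
        habs θ p, mul_assoc]
    rw [lintegral_congr hpt, lintegral_add_right_eq_self (J θ) _,
      ← lintegral_comp_polarCoord_symm' (J θ)]
    refine setLIntegral_congr_fun polarCoord.open_target.measurableSet
      (fun x hx => ?_)
    have hx1 : (0:ℝ) < x.1 := hx.1
    have hs2 : (x.1 * Real.cos x.2) ^ 2 + (x.1 * Real.sin x.2) ^ 2 = x.1 ^ 2 := by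
      have h := Real.sin_sq_add_cos_sq x.2
      linear_combination x.1 ^ 2 * h
    simp only [hJdef, polarCoord_symm_apply, hs2, Real.sqrt_sq hx1.le]
  rw [lintegral_congr hIθ]
  -- swap the order of integration
  have hswapmeas : Measurable (Function.uncurry fun (θ : ℝ) (x : ℝ × ℝ) =>
      ENNReal.ofReal x.1 * (G (x.1 * Real.cos x.2 - c * Real.cos θ)
        * G (x.1 * Real.sin x.2 - c * Real.sin θ) * ind x.1)) := by
    apply Measurable.mul
    · exact (measurable_fst.comp measurable_snd).ennreal_ofReal
    apply Measurable.mul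
    apply Measurable.fun_mul
    · exact hGmeas.comp (by fun_prop : Measurable fun p : ℝ × (ℝ × ℝ) =>
        p.2.1 * Real.cos p.2.2 - c * Real.cos p.1)
    · exact hGmeas.comp (by fun_prop : Measurable fun p : ℝ × (ℝ × ℝ) =>
        p.2.1 * Real.sin p.2.2 - c * Real.sin p.1)
    · exact hindmeas.comp (measurable_fst.comp measurable_snd)
  rw [lintegral_lintegral_swap hswapmeas.aemeasurable]
  -- angular integral
  have hang : ∀ x : ℝ × ℝ,
      (∫⁻ θ in Set.Ico (-π) π, ENNReal.ofReal x.1 *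
        (G (x.1 * Real.cos x.2 - c * Real.cos θ) * G (x.1 * Real.sin x.2 - c * Real.sin θ)
          * ind x.1))
      = ENNReal.ofReal x.1 * ind x.1 *
          ENNReal.ofReal ((π * σ ^ 2)⁻¹ * Real.exp (-(x.1 ^ 2 + c ^ 2) / σ ^ 2)) *
          ENNReal.ofReal (2 * π * I0 (2 * x.1 * c / σ ^ 2)) := by
    intro x
    have hGG : ∀ θ : ℝ, G (x.1 * Real.cos x.2 - c * Real.cos θ)
          * G (x.1 * Real.sin x.2 - c * Real.sin θ)
        = ENNReal.ofReal ((π * σ ^ 2)⁻¹ * Real.exp (-(x.1 ^ 2 + c ^ 2) / σ ^ 2)) *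
            ENNReal.ofReal (Real.exp (2 * x.1 * c / σ ^ 2 * Real.cos (x.2 - θ))) := by
      intro θ
      simp only [hGdef, gaussianPDF, hvdef]
      rw [← ENNReal.ofReal_mul (gaussianPDFReal_nonneg _ _ _), gauss_prod σ hσ c x.1 θ x.2,
        ENNReal.ofReal_mul (by positivity)]
    have hpt2 : ∀ θ : ℝ, ENNReal.ofReal x.1 *
        (G (x.1 * Real.cos x.2 - c * Real.cos θ) * G (x.1 * Real.sin x.2 - c * Real.sin θ)
          * ind x.1)
        = (ENNReal.ofReal x.1 * ind x.1 *
            ENNReal.ofReal ((π * σ ^ 2)⁻¹ * Real.exp (-(x.1 ^ 2 + c ^ 2) / σ ^ 2))) *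
          ENNReal.ofReal (Real.exp (2 * x.1 * c / σ ^ 2 * Real.cos (x.2 - θ))) := by
      intro θ
      rw [hGG θ]
      ring
    have hexpmeas : Measurable fun θ : ℝ =>
        ENNReal.ofReal (Real.exp (2 * x.1 * c / σ ^ 2 * Real.cos (x.2 - θ))) :=
      (Real.continuous_exp.comp (continuous_const.mul
        (Real.continuous_cos.comp (continuous_const.sub continuous_id)))).measurable.ennreal_ofReal
    rw [lintegral_congr hpt2, lintegral_const_mul _ hexpmeas,
      angular (2 * x.1 * c / σ ^ 2) x.2, mul_assoc]
  rw [lintegral_congr hang]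
  -- split the product set
  have hHmeas : Measurable fun r : ℝ =>
      ENNReal.ofReal r * ind r *
        ENNReal.ofReal ((π * σ ^ 2)⁻¹ * Real.exp (-(r ^ 2 + c ^ 2) / σ ^ 2)) *
        ENNReal.ofReal (2 * π * I0 (2 * r * c / σ ^ 2)) := by
    apply Measurable.mul
    apply Measurable.mul
    apply Measurable.mul
    · exact measurable_id.ennreal_ofReal
    · exact hindmeas
    · refine (Continuous.measurable ?_).ennreal_ofReal
      exact continuous_const.mul (Real.continuous_exp.comp
        (Continuous.div_const (((continuous_pow 2).add continuous_const).neg) _))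
    · refine (Continuous.measurable ?_).ennreal_ofReal
      exact continuous_const.mul (I0_continuous.comp
        (Continuous.div_const ((continuous_const.mul continuous_id).mul continuous_const) _))
  rw [show polarCoord.target = Set.Ioi (0:ℝ) ×ˢ Set.Ioo (-π) π from rfl,
    Measure.volume_eq_prod, ← Measure.prod_restrict,
    lintegral_prod (fun x : ℝ × ℝ => ENNReal.ofReal x.1 * ind x.1 *
        ENNReal.ofReal ((π * σ ^ 2)⁻¹ * Real.exp (-(x.1 ^ 2 + c ^ 2) / σ ^ 2)) *
        ENNReal.ofReal (2 * π * I0 (2 * x.1 * c / σ ^ 2)))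
      (hHmeas.comp measurable_fst).aemeasurable]
  have hφint : ∀ r : ℝ, (∫⁻ _ in Set.Ioo (-π) π,
      (ENNReal.ofReal r * ind r *
        ENNReal.ofReal ((π * σ ^ 2)⁻¹ * Real.exp (-(r ^ 2 + c ^ 2) / σ ^ 2)) *
        ENNReal.ofReal (2 * π * I0 (2 * r * c / σ ^ 2))))
      = (ENNReal.ofReal r * ind r *
        ENNReal.ofReal ((π * σ ^ 2)⁻¹ * Real.exp (-(r ^ 2 + c ^ 2) / σ ^ 2)) *
        ENNReal.ofReal (2 * π * I0 (2 * r * c / σ ^ 2))) * ENNReal.ofReal (2 * π) := by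
    intro r
    rw [setLIntegral_const, Real.volume_Ioo, show π - -π = 2 * π by ring]
  rw [lintegral_congr hφint, smul_eq_mul, ← lintegral_const_mul' _ _
    (ENNReal.inv_ne_top.mpr (ENNReal.ofReal_pos.mpr h2π).ne')]
  -- pointwise identification of the density on (0, ∞)
  have hpointwise : ∀ r ∈ Set.Ioi (0:ℝ),
      (ENNReal.ofReal (2 * π))⁻¹ *
        (ENNReal.ofReal r * ind r *
          ENNReal.ofReal ((π * σ ^ 2)⁻¹ * Real.exp (-(r ^ 2 + c ^ 2) / σ ^ 2)) *
          ENNReal.ofReal (2 * π * I0 (2 * r * c / σ ^ 2)) * ENNReal.ofReal (2 * π))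
      = s.indicator (fun r => ENNReal.ofReal
          ((2 * r / σ ^ 2) * Real.exp (-(r ^ 2 + c ^ 2) / σ ^ 2)
            * I0 (2 * r * c / σ ^ 2))) r := by
    intro r hr
    have hr' : (0:ℝ) < r := hr
    by_cases hrs : r ∈ s
    · have hI0 := I0_nonneg (2 * r * c / σ ^ 2)
      have hind1 : ind r = 1 := by simp [hinddef, Set.indicator_of_mem hrs]
      rw [Set.indicator_of_mem hrs, hind1, mul_one,
        ← ENNReal.ofReal_mul (le_of_lt hr'),
        ← ENNReal.ofReal_mul (mul_nonneg hr'.le (by positivity)),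
        ← ENNReal.ofReal_mul (mul_nonneg (mul_nonneg hr'.le (by positivity))
          (mul_nonneg (by positivity) hI0)),
        show r * ((π * σ ^ 2)⁻¹ * Real.exp (-(r ^ 2 + c ^ 2) / σ ^ 2)) *
            (2 * π * I0 (2 * r * c / σ ^ 2)) * (2 * π)
          = (2 * π) * ((2 * r / σ ^ 2) * Real.exp (-(r ^ 2 + c ^ 2) / σ ^ 2)
            * I0 (2 * r * c / σ ^ 2)) by field_simp,
        ENNReal.ofReal_mul (by positivity : (0:ℝ) ≤ 2 * π), ← mul_assoc,
        ENNReal.inv_mul_cancel (ENNReal.ofReal_pos.mpr h2π).ne' ENNReal.ofReal_ne_top, one_mul]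
    · have hind0 : ind r = 0 := by simp [hinddef, Set.indicator_of_notMem hrs]
      rw [Set.indicator_of_notMem hrs, hind0]
      simp
  rw [setLIntegral_congr_fun measurableSet_Ioi
    hpointwise, lintegral_indicator hs]
  rw [withDensity_apply _ hs]
end

section
/- Let P > 0, let N be a positive integer and α = π/N. Let A be a real random variable with density a ↦ (2a/P)·e^{−a²/P} on (0, ∞) (Rayleigh with E[A²] = P), let Θ₁ be uniform on [−α, α), let Θ₂ be uniform on the finite set {2nα : n = 0, 1, …, N−1}, and assume A, Θ₁, Θ₂ are mutually independent. Then the complex random variable X = A·e^{i(Θ₁+Θ₂)} is circularly symmetric Gaussian CN(0, P), i.e., X has density z ↦ (1/(πP))·e^{−|z|²/P} with respect to Lebesgue measure on ℂ. -/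
open MeasureTheory ProbabilityTheory Real ENNReal

lemma aux_map_withDensity {αx βx : Type*} [MeasurableSpace αx] [MeasurableSpace βx]
    (σ : Measure αx) {f : αx → βx} (hf : Measurable f) {h : βx → ℝ≥0∞} (hh : Measurable h) :
    Measure.map f (σ.withDensity (h ∘ f)) = (Measure.map f σ).withDensity h := by
  ext t ht
  rw [Measure.map_apply hf ht, withDensity_apply _ (hf ht), withDensity_apply _ ht,
    setLIntegral_map ht hh hf]
  rfl

lemma aux_prod_smul {αx βx : Type*} [MeasurableSpace αx] [MeasurableSpace βx]
    (σ : Measure αx) [SFinite σ] (ν : Measure βx) [SFinite ν] (c : ℝ≥0∞) (hc : c ≠ ⊤) :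
    σ.prod (c • ν) = c • σ.prod ν := by
  ext s hs
  rw [Measure.smul_apply, Measure.prod_apply hs, Measure.prod_apply hs]
  simp only [Measure.smul_apply, smul_eq_mul]
  rw [lintegral_const_mul' _ _ hc]

lemma aux_map_add_restrict (a b x : ℝ) :
    Measure.map (· + x) (volume.restrict (Set.Ico a b))
      = volume.restrict (Set.Ico (a+x) (b+x)) := by
  have h1 : (volume : Measure ℝ) = Measure.map (· + x) volume :=
    (map_add_right_eq_self volume x).symm
  conv_rhs => rw [h1]
  rw [Measure.restrict_map (measurable_add_const x) measurableSet_Ico]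
  congr 1
  ext y
  simp [Set.mem_Ico]

lemma aux_sum_restrict (a : ℝ) (ha : 0 ≤ a) (k : ℕ) :
    ∑ n ∈ Finset.range k, volume.restrict (Set.Ico (2*(n:ℝ)*a - a) (2*(n:ℝ)*a + a))
      = volume.restrict (Set.Ico (-a) (2*(k:ℝ)*a - a)) := by
  induction k with
  | zero => simp
  | succ k ih =>
      rw [Finset.sum_range_succ, ih]
      have h1 : (-a : ℝ) ≤ 2*(k:ℝ)*a - a := by nlinarith [Nat.cast_nonneg (α := ℝ) k]
      have h2 : (2*(k:ℝ)*a - a) ≤ 2*(k:ℝ)*a + a := by linarith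
      have h3 : (2*((k:ℝ)+1)*a - a) = 2*(k:ℝ)*a + a := by ring
      push_cast
      rw [h3, ← Set.Ico_union_Ico_eq_Ico h1 h2,
        Measure.restrict_union Set.Ico_disjoint_Ico_same measurableSet_Ico]

lemma aux_sfinite_sum {αx ι : Type*} [MeasurableSpace αx] (s : Finset ι) (m : ι → Measure αx)
    [hm : ∀ i, SFinite (m i)] : SFinite (∑ i ∈ s, m i) := by
  classical
  induction s using Finset.induction with
  | empty => simpa using inferInstanceAs (SFinite (0 : Measure αx))
  | @insert a t h ih =>
      rw [Finset.sum_insert h]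
      haveI := ih
      infer_instance

lemma aux_map_prod_sum {ι : Type*} (ν₁ : Measure ℝ) [SFinite ν₁] (s : Finset ι)
    (c : ι → ℝ≥0∞) (hc : ∀ i, c i ≠ ⊤) (x : ι → ℝ) :
    Measure.map (fun p : ℝ × ℝ => p.1 + p.2) (ν₁.prod (∑ i ∈ s, c i • Measure.dirac (x i)))
      = ∑ i ∈ s, c i • Measure.map (· + x i) ν₁ := by
  classical
  induction s using Finset.induction with
  | empty => simp
  | @insert a t h ih =>
      haveI := aux_sfinite_sum t (fun i => c i • Measure.dirac (x i))
      rw [Finset.sum_insert h, Finset.sum_insert h, Measure.prod_add,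
        Measure.map_add _ _ measurable_add, ih,
        aux_prod_smul ν₁ (Measure.dirac (x a)) (c a) (hc a), Measure.map_smul,
        Measure.prod_dirac, Measure.map_map measurable_add measurable_prodMk_right]
      rfl

lemma aux_withDensity_prod {αx βx : Type*} [MeasurableSpace αx] [MeasurableSpace βx]
    (σ : Measure αx) [SFinite σ] (τ : Measure βx) [SFinite τ] {f : αx → ℝ≥0∞}
    (hf : Measurable f) :
    (σ.withDensity f).prod τ = (σ.prod τ).withDensity (fun p => f p.1) := by
  ext s hs
  have hm : Measurable fun p : αx × βx => f p.1 := hf.comp measurable_fst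
  rw [Measure.prod_apply hs, withDensity_apply _ hs,
    lintegral_withDensity_eq_lintegral_mul σ hf (measurable_measure_prodMk_left hs),
    ← lintegral_indicator hs, lintegral_prod _ (hm.indicator hs).aemeasurable]
  refine lintegral_congr fun x => ?_
  have hind : (fun y => s.indicator (fun p : αx × βx => f p.1) (x, y))
      = (Prod.mk x ⁻¹' s).indicator (fun _ => f x) := by
    funext y
    by_cases hxy : (x, y) ∈ s <;> simp [Set.indicator, hxy]
  simp only [Pi.mul_apply]
  rw [hind, lintegral_indicator (measurable_prodMk_left hs), setLIntegral_const]

lemma aux_polar_measurable : Measurable (⇑polarCoord.symm) := by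
  have : (⇑polarCoord.symm) = fun p : ℝ×ℝ => (p.1 * Real.cos p.2, p.1 * Real.sin p.2) := by
    funext p; simp [polarCoord]
  rw [this]; fun_prop

lemma aux_polar_map :
    Measure.map (⇑polarCoord.symm)
      ((volume.restrict polarCoord.target).withDensity fun p => ENNReal.ofReal p.1) = volume := by
  set B : ℝ × ℝ → ℝ × ℝ →L[ℝ] ℝ × ℝ := fun p =>
    LinearMap.toContinuousLinearMap (Matrix.toLin (Module.Basis.finTwoProd ℝ) (Module.Basis.finTwoProd ℝ)
      !![Real.cos p.2, -p.1 * Real.sin p.2; Real.sin p.2, p.1 * Real.cos p.2]) with hB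
  have B_det : ∀ p, (B p).det = p.1 := by
    intro p
    conv_rhs => rw [← one_mul p.1, ← Real.cos_sq_add_sin_sq p.2]
    simp only [hB, neg_mul, LinearMap.det_toContinuousLinearMap, LinearMap.det_toLin,
      Matrix.det_fin_two_of, sub_neg_eq_add]
    ring
  have hinj : Set.InjOn (⇑polarCoord.symm) polarCoord.target := by
    have h := polarCoord.symm.injOn
    rwa [polarCoord.symm_source] at h
  have hd : ((volume.restrict polarCoord.target).withDensity fun p => ENNReal.ofReal p.1)
      = (volume.restrict polarCoord.target).withDensity
          fun p => ENNReal.ofReal |(B p).det| := by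
    apply withDensity_congr_ae
    filter_upwards [ae_restrict_mem polarCoord.open_target.measurableSet] with p hp
    rw [B_det, abs_of_pos hp.1]
  rw [hd, map_withDensity_abs_det_fderiv_eq_addHaar volume polarCoord.open_target.measurableSet.nullMeasurableSet
    (fun p _ => (show HasFDerivAt _ (B p) p from hasFDerivAt_polarCoord_symm p).hasFDerivWithinAt) hinj,
    polarCoord.symm_image_target_eq_source,
    Measure.restrict_congr_set polarCoord_source_ae_eq_univ, Measure.restrict_univ]

lemma aux_final (P : ℝ) :
    Measure.map (⇑polarCoord.symm)
      ((volume.restrict polarCoord.target).withDensity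
        (fun p => ENNReal.ofReal p.1 * ENNReal.ofReal ((1/(π*P)) * Real.exp (-p.1^2/P))))
      = volume.withDensity
          (fun x : ℝ×ℝ => ENNReal.ofReal ((1/(π*P)) * Real.exp (-(x.1^2+x.2^2)/P))) := by
  set h : ℝ×ℝ → ℝ≥0∞ := fun x => ENNReal.ofReal ((1/(π*P)) * Real.exp (-(x.1^2+x.2^2)/P))
    with hh_def
  have hh : Measurable h := by unfold h; fun_prop
  have key : (fun p : ℝ×ℝ => ENNReal.ofReal p.1 * ENNReal.ofReal ((1/(π*P)) * Real.exp (-p.1^2/P)))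
      = (fun p : ℝ×ℝ => ENNReal.ofReal p.1) * (h ∘ ⇑polarCoord.symm) := by
    funext p
    have h2 : (polarCoord.symm p).1^2 + (polarCoord.symm p).2^2 = p.1^2 := by
      simp only [polarCoord, OpenPartialHomeomorph.mk_coe_symm, PartialEquiv.coe_symm_mk]
      rw [mul_pow, mul_pow, ← mul_add, Real.cos_sq_add_sin_sq, mul_one]
    simp only [Pi.mul_apply, Function.comp_apply, hh_def, h2]
  rw [key, withDensity_mul _ (by fun_prop) (hh.comp aux_polar_measurable),
    aux_map_withDensity _ aux_polar_measurable hh, aux_polar_map]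

/-- Sum-rate optimality of Schemes I and II: if `A` is Rayleigh with `E[A²] = P`
(density `a ↦ (2a/P)e^{−a²/P}` on `(0,∞)`), `Θ₁` is uniform on `[−α, α)` with `α = π/N`,
`Θ₂` is uniform on the finite set `{2nα : n = 0, …, N−1}`, and `A, Θ₁, Θ₂` are mutually
independent, then `X = A·e^{i(Θ₁+Θ₂)}` is circularly symmetric Gaussian `CN(0, P)`, i.e.
has density `z ↦ (1/(πP))·e^{−|z|²/P}` with respect to Lebesgue measure on `ℂ`. -/
theorem stmt7 {Ω : Type*} [MeasurableSpace Ω] (μ : Measure Ω) [IsProbabilityMeasure μ]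
    (P : ℝ) (hP : 0 < P) (N : ℕ) (hN : 0 < N) (α : ℝ) (hα : α = π / N)
    (A Θ₁ Θ₂ : Ω → ℝ) (hAm : Measurable A) (h1m : Measurable Θ₁) (h2m : Measurable Θ₂)
    (hA : μ.map A = (volume.restrict (Set.Ioi (0:ℝ))).withDensity
        (fun a => ENNReal.ofReal ((2 * a / P) * Real.exp (-a ^ 2 / P))))
    (h1 : μ.map Θ₁ = (ENNReal.ofReal (2 * α))⁻¹ • volume.restrict (Set.Ico (-α) α))
    (h2 : μ.map Θ₂ = ∑ n ∈ Finset.range N, ((N : ℝ≥0∞))⁻¹ • Measure.dirac (2 * n * α))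
    (hind : iIndepFun ![A, Θ₁, Θ₂] μ) :
    μ.map (fun ω => (A ω : ℂ) * Complex.exp (((Θ₁ ω + Θ₂ ω : ℝ) : ℂ) * Complex.I))
      = volume.withDensity (fun z => ENNReal.ofReal
          ((1 / (π * P)) * Real.exp (-‖z‖ ^ 2 / P))) := by
  have hπ : (0:ℝ) < π := Real.pi_pos
  have hαpos : 0 < α := by rw [hα]; positivity
  have hNα : (N:ℝ) * α = π := by
    rw [hα]; field_simp
  have hαle : α ≤ π := by
    rw [hα]
    rw [div_le_iff₀ (by exact_mod_cast hN)]
    nlinarith [hπ.le, (show (1:ℝ) ≤ N by exact_mod_cast hN)]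
  set G : ℝ × ℝ → ℂ := fun p => (p.1 : ℂ) * Complex.exp ((p.2 : ℂ) * Complex.I) with hG
  have hGm : Measurable G := by
    apply Measurable.mul
    · exact Complex.measurable_ofReal.comp measurable_fst
    · exact Complex.measurable_exp.comp
        ((Complex.measurable_ofReal.comp measurable_snd).mul measurable_const)
  -- pair independence and law of the pair
  have hAΘ : IndepFun A (fun ω => Θ₁ ω + Θ₂ ω) μ := by
    have h := hind.indepFun_add_right (fun i => by fin_cases i <;> assumption)
      0 1 2 (by decide) (by decide)
    simp at h
    exact h
  have hpair : μ.map (fun ω => (A ω, Θ₁ ω + Θ₂ ω))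
      = (μ.map A).prod (μ.map (fun ω => Θ₁ ω + Θ₂ ω)) :=
    (indepFun_iff_map_prod_eq_prod_map_map hAm.aemeasurable
      (h1m.add h2m).aemeasurable).1 hAΘ
  have hmapX : μ.map (fun ω => (A ω : ℂ) * Complex.exp (((Θ₁ ω + Θ₂ ω : ℝ) : ℂ) * Complex.I))
      = Measure.map G ((μ.map A).prod (μ.map (fun ω => Θ₁ ω + Θ₂ ω))) := by
    rw [← hpair, Measure.map_map hGm (hAm.prodMk (show Measurable fun ω => Θ₁ ω + Θ₂ ω from h1m.add h2m))]
    rfl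
  -- law of the sum of the angles
  have hsum : μ.map (fun ω => Θ₁ ω + Θ₂ ω)
      = (ENNReal.ofReal (2*π))⁻¹ • volume.restrict (Set.Ico (-α) (2*π - α)) := by
    have hmap2 : μ.map (fun ω => (Θ₁ ω, Θ₂ ω)) = (μ.map Θ₁).prod (μ.map Θ₂) :=
      (indepFun_iff_map_prod_eq_prod_map_map h1m.aemeasurable h2m.aemeasurable).1
        (hind.indepFun (show (1 : Fin 3) ≠ 2 by decide))
    have hcomp : μ.map (fun ω => Θ₁ ω + Θ₂ ω)
        = Measure.map (fun p : ℝ × ℝ => p.1 + p.2) ((μ.map Θ₁).prod (μ.map Θ₂)) := by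
      rw [← hmap2, Measure.map_map measurable_add (h1m.prodMk h2m)]
      rfl
    have hNtop : ((N : ℝ≥0∞))⁻¹ ≠ ⊤ := by
      simp [ENNReal.inv_eq_top, hN.ne']
    rw [hcomp, h1, h2, aux_map_prod_sum _ _ _ (fun i => hNtop) _]
    have hterm : ∀ n : ℕ, ((N : ℝ≥0∞))⁻¹ • Measure.map (· + 2*(n:ℝ)*α)
          ((ENNReal.ofReal (2*α))⁻¹ • volume.restrict (Set.Ico (-α) α))
        = (((N : ℝ≥0∞))⁻¹ * (ENNReal.ofReal (2*α))⁻¹) •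
            volume.restrict (Set.Ico (2*(n:ℝ)*α - α) (2*(n:ℝ)*α + α)) := by
      intro n
      rw [Measure.map_smul, aux_map_add_restrict, smul_smul]
      congr 2 <;> ring
    rw [Finset.sum_congr rfl (fun n _ => hterm n), ← Finset.smul_sum,
      aux_sum_restrict α hαpos.le N]
    have hend : 2*(N:ℝ)*α - α = 2*π - α := by nlinarith [hNα]
    rw [hend]
    congr 1
    rw [← ENNReal.mul_inv (Or.inl (by simp [hN.ne'])) (Or.inl (by simp))]
    congr 1
    rw [← ENNReal.ofReal_natCast N, ← ENNReal.ofReal_mul (by positivity)]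
    congr 1
    nlinarith [hNα]
  -- periodic reduction of the angle
  have hstep : Measure.map G
        ((μ.map A).prod ((ENNReal.ofReal (2*π))⁻¹ • volume.restrict (Set.Ico (-α) (2*π - α))))
      = Measure.map G
        ((μ.map A).prod ((ENNReal.ofReal (2*π))⁻¹ • volume.restrict (Set.Ioo (-π) π))) := by
    have hc2top : (ENNReal.ofReal (2*π))⁻¹ ≠ ⊤ := by
      rw [Ne, ENNReal.inv_eq_top, ENNReal.ofReal_eq_zero, not_le]
      positivity
    have hTU : volume.restrict (Set.Ico (-α) (2*π - α))
        = volume.restrict (Set.Ico (-α) π) + volume.restrict (Set.Ico π (2*π - α)) := by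
      rw [← Set.Ico_union_Ico_eq_Ico (by linarith) (by linarith),
        Measure.restrict_union Set.Ico_disjoint_Ico_same measurableSet_Ico]
    have hU : volume.restrict (Set.Ico π (2*π - α))
        = Measure.map (· + 2*π) (volume.restrict (Set.Ico (-π) (-α))) := by
      rw [aux_map_add_restrict]
      congr 1
      rw [show -π + 2*π = π by ring, show -α + 2*π = 2*π - α by ring]
    have hGU : Measure.map G ((μ.map A).prod (volume.restrict (Set.Ico π (2*π - α))))
        = Measure.map G ((μ.map A).prod (volume.restrict (Set.Ico (-π) (-α)))) := by
      have hmm := Measure.map_prod_map (f := id) (g := (· + 2*π)) (μ.map A)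
        (volume.restrict (Set.Ico (-π) (-α))) measurable_id (measurable_add_const _)
      rw [Measure.map_id] at hmm
      rw [hU, hmm, Measure.map_map hGm (measurable_id.prodMap (measurable_add_const _))]
      congr 1
      funext p
      simp only [hG, Function.comp_apply, Prod.map_fst, Prod.map_snd, id_eq]
      have hcast : ((p.2 + 2*π : ℝ) : ℂ) * Complex.I
          = (p.2 : ℂ) * Complex.I + 2*(π:ℂ)*Complex.I := by
        push_cast
        ring
      rw [hcast, Complex.exp_add, Complex.exp_two_pi_mul_I, mul_one]
    have hVT : volume.restrict (Set.Ico (-π) (-α)) + volume.restrict (Set.Ico (-α) π)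
        = volume.restrict (Set.Ioo (-π) π) := by
      rw [← Measure.restrict_union Set.Ico_disjoint_Ico_same measurableSet_Ico,
        Set.Ico_union_Ico_eq_Ico (by linarith) (by linarith)]
      exact (Measure.restrict_congr_set (Ioo_ae_eq_Ico (μ := volume) (a := -π) (b := π))).symm
    rw [hTU, aux_prod_smul _ _ _ hc2top, aux_prod_smul _ _ _ hc2top,
      Measure.map_smul, Measure.map_smul, Measure.prod_add,
      Measure.map_add _ _ hGm, hGU, ← Measure.map_add _ _ hGm, ← Measure.prod_add,
      add_comm, hVT]
  -- assemble the density on the polar rectangle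
  have hfinal : (μ.map A).prod ((ENNReal.ofReal (2*π))⁻¹ • volume.restrict (Set.Ioo (-π) π))
      = (volume.restrict polarCoord.target).withDensity
          (fun p => ENNReal.ofReal p.1 * ENNReal.ofReal ((1/(π*P)) * Real.exp (-p.1^2/P))) := by
    have hc2top : (ENNReal.ofReal (2*π))⁻¹ ≠ ⊤ := by
      rw [Ne, ENNReal.inv_eq_top, ENNReal.ofReal_eq_zero, not_le]
      positivity
    have hfAm : Measurable fun a : ℝ => ENNReal.ofReal ((2 * a / P) * Real.exp (-a ^ 2 / P)) := by
      apply ENNReal.measurable_ofReal.comp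
      exact ((measurable_id.const_mul 2).div_const P).mul
        (Real.measurable_exp.comp ((measurable_id.pow_const 2).neg.div_const P))
    rw [aux_prod_smul _ _ _ hc2top, hA, aux_withDensity_prod _ _ hfAm,
      Measure.prod_restrict, ← Measure.volume_eq_prod,
      show Set.Ioi (0:ℝ) ×ˢ Set.Ioo (-π) π = polarCoord.target from rfl,
      ← withDensity_smul' _ _ hc2top]
    congr 1
    funext p
    simp only [Pi.smul_apply, smul_eq_mul]
    rcases le_or_gt p.1 0 with hp | hp
    · have e1 : (2 * p.1 / P) * Real.exp (-p.1 ^ 2 / P) ≤ 0 :=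
        mul_nonpos_of_nonpos_of_nonneg (div_nonpos_of_nonpos_of_nonneg (by linarith) hP.le) (Real.exp_pos _).le
      rw [ENNReal.ofReal_of_nonpos e1, ENNReal.ofReal_of_nonpos hp, mul_zero, zero_mul]
    · rw [← ENNReal.ofReal_inv_of_pos (show (0:ℝ) < 2*π by positivity),
        ← ENNReal.ofReal_mul (by positivity), ← ENNReal.ofReal_mul hp.le]
      congr 1
      have hπ' : π ≠ 0 := hπ.ne'
      have hP' : (P:ℝ) ≠ 0 := hP.ne'
      field_simp
  rw [hmapX, hsum, hstep, hfinal]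
  -- change of variables to ℂ
  have hGdecomp : G = (⇑Complex.measurableEquivRealProd.symm) ∘ (⇑polarCoord.symm) := by
    funext p
    simp only [hG, Function.comp_apply, Complex.measurableEquivRealProd_symm_apply,
      polarCoord, OpenPartialHomeomorph.mk_coe_symm, PartialEquiv.coe_symm_mk]
    rw [Complex.exp_mul_I, Complex.mk_eq_add_mul_I]
    push_cast
    ring
  rw [hGdecomp,
    ← Measure.map_map Complex.measurableEquivRealProd.symm.measurable aux_polar_measurable,
    aux_final P]
  have hdens : (fun x : ℝ×ℝ => ENNReal.ofReal ((1/(π*P)) * Real.exp (-(x.1^2+x.2^2)/P)))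
      = (fun z : ℂ => ENNReal.ofReal ((1 / (π * P)) * Real.exp (-‖z‖ ^ 2 / P)))
        ∘ (⇑Complex.measurableEquivRealProd.symm) := by
    funext x
    simp only [Function.comp_apply]
    congr 2
    rw [Complex.sq_norm]
    simp [Complex.normSq_mk]
    ring
  have htd : Measurable fun z : ℂ =>
      ENNReal.ofReal ((1 / (π * P)) * Real.exp (-‖z‖ ^ 2 / P)) := by
    apply ENNReal.measurable_ofReal.comp
    exact (Real.measurable_exp.comp
      (((continuous_norm.measurable.pow_const 2).neg).div_const P)).const_mul _
  rw [hdens, aux_map_withDensity _ Complex.measurableEquivRealProd.symm.measurable htd,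
    (Complex.volume_preserving_equiv_real_prod.symm Complex.measurableEquivRealProd).map_eq]
end

section
/- For every α > 0 and β ≥ 0, ∫_0^∞ exp(−α x) · I₀(2√(β x)) dx = (1/α) · exp(β/α). -/
open MeasureTheory Real

lemma cosIntRec (n : ℕ) : (∫ θ in (-π)..π, Real.cos θ ^ (n+2))
    = (n+1)/(n+2) * ∫ θ in (-π)..π, Real.cos θ ^ n := by
  rw [integral_cos_pow]
  simp [Real.sin_pi]

lemma cosIntOdd (m : ℕ) : (∫ θ in (-π)..π, Real.cos θ ^ (2*m+1)) = 0 := by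
  induction m with
  | zero => simp
  | succ k ih =>
      have : 2*(k+1)+1 = (2*k+1)+2 := by ring
      rw [this, cosIntRec, ih, mul_zero]

lemma cosIntEven (m : ℕ) : (∫ θ in (-π)..π, Real.cos θ ^ (2*m))
    = 2*π*(2*m).factorial / (4^m * (m.factorial)^2) := by
  induction m with
  | zero => simp [two_mul]
  | succ k ih =>
      have h : 2*(k+1) = (2*k)+2 := by ring
      rw [h, cosIntRec, ih]
      have h1 : ((2*k:ℕ)+1 : ℝ) ≠ 0 := by positivity
      have h2 : ((2*k:ℕ)+2 : ℝ) ≠ 0 := by positivity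
      have h3 : (4:ℝ)^k ≠ 0 := by positivity
      have h4 : ((k.factorial : ℝ)) ≠ 0 := Nat.cast_ne_zero.2 k.factorial_ne_zero
      have e1 : (2*k+2).factorial = (2*k+2) * ((2*k+1) * (2*k).factorial) := by
        have h5 : 2*k+2 = (2*k+1)+1 := by ring
        rw [h5, Nat.factorial_succ, Nat.factorial_succ]
      have e2 : (k+1).factorial = (k+1) * k.factorial := Nat.factorial_succ k
      rw [e1, e2]
      push_cast
      field_simp
      ring

lemma I0_eq_tsum (x : ℝ) :
    I0 x = ∑' m : ℕ, x^(2*m) / (4^m * (m.factorial)^2) := by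
  have hle : -π ≤ π := by linarith [pi_pos]
  have hexp : ∀ θ : ℝ, Real.exp (x * Real.cos θ)
      = ∑' n : ℕ, (x * Real.cos θ)^n / n.factorial := by
    intro θ
    rw [Real.exp_eq_exp_ℝ, NormedSpace.exp_eq_tsum_div]
  have hFint : ∀ n : ℕ, Integrable (fun θ : ℝ => (x * Real.cos θ)^n / n.factorial)
      (volume.restrict (Set.Ioc (-π) π)) := by
    intro n
    exact (Continuous.integrableOn_Ioc (by continuity))
  have hbound : ∀ n : ℕ, (∫ θ in Set.Ioc (-π) π, ‖(x * Real.cos θ)^n / n.factorial‖)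
      ≤ |x|^n / n.factorial * (2*π) := by
    intro n
    have hC : ∀ θ ∈ Set.Ioc (-π) π, ‖‖(x * Real.cos θ)^n / n.factorial‖‖ ≤ |x|^n / n.factorial := by
      intro θ _
      rw [norm_norm, norm_div, norm_pow]
      have hxc : ‖x * Real.cos θ‖ ≤ |x| := by
        rw [norm_mul]
        calc ‖x‖ * ‖Real.cos θ‖ ≤ ‖x‖ * 1 := by
              gcongr; exact abs_cos_le_one θ
          _ = |x| := by simp
      have hnn : ‖(n.factorial : ℝ)‖ = (n.factorial : ℝ) := by
        simp
      rw [hnn]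
      exact div_le_div_of_nonneg_right
        (pow_le_pow_left₀ (norm_nonneg _) hxc n) (Nat.cast_nonneg _)
    have hfin : volume (Set.Ioc (-π) π) < ⊤ := measure_Ioc_lt_top
    have := norm_setIntegral_le_of_norm_le_const (C := |x|^n / n.factorial) hfin hC
    calc (∫ θ in Set.Ioc (-π) π, ‖(x * Real.cos θ)^n / n.factorial‖)
        ≤ ‖∫ θ in Set.Ioc (-π) π, ‖(x * Real.cos θ)^n / n.factorial‖‖ := le_abs_self _
      _ ≤ |x|^n / n.factorial * (volume (Set.Ioc (-π) π)).toReal := this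
      _ = |x|^n / n.factorial * (2*π) := by
          rw [Real.volume_Ioc]
          congr 1
          rw [ENNReal.toReal_ofReal (by linarith [pi_pos])]
          ring
  have hsum : Summable (fun n : ℕ =>
      ∫ θ in Set.Ioc (-π) π, ‖(x * Real.cos θ)^n / n.factorial‖) := by
    apply Summable.of_nonneg_of_le
    · intro n; positivity
    · exact hbound
    · exact (Real.summable_pow_div_factorial |x|).mul_right (2*π)
  have hswap := integral_tsum_of_summable_integral_norm hFint hsum
  have hI : I0 x = (1/(2*π)) * ∑' n : ℕ,
      ∫ θ in Set.Ioc (-π) π, (x * Real.cos θ)^n / n.factorial := by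
    rw [I0, intervalIntegral.integral_of_le hle]
    rw [show (fun θ => Real.exp (x * Real.cos θ)) = fun θ =>
      ∑' n : ℕ, (x * Real.cos θ)^n / n.factorial from funext hexp]
    rw [← hswap]
  rw [hI]
  have hterm : ∀ n : ℕ, (∫ θ in Set.Ioc (-π) π, (x * Real.cos θ)^n / n.factorial)
      = x^n / n.factorial * ∫ θ in (-π)..π, Real.cos θ ^ n := by
    intro n
    rw [intervalIntegral.integral_of_le hle, ← integral_const_mul]
    congr 1
    ext θ
    rw [mul_pow]
    ring
  simp_rw [hterm]
  -- now reindex over even n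
  have hinj : Function.Injective (fun m : ℕ => 2*m) := fun a b h => by dsimp only at h; omega
  have hsupp : Function.support (fun n : ℕ => x^n / n.factorial * ∫ θ in (-π)..π, Real.cos θ ^ n)
      ⊆ Set.range (fun m : ℕ => 2*m) := by
    intro n hn
    simp only [Function.mem_support] at hn
    rcases Nat.even_or_odd n with ⟨m, hm⟩ | ⟨m, hm⟩
    · exact ⟨m, by dsimp only; omega⟩
    · exfalso
      apply hn
      show x^n / n.factorial * (∫ θ in (-π)..π, Real.cos θ ^ n) = 0
      rw [hm, cosIntOdd, mul_zero]
  rw [← hinj.tsum_eq hsupp, ← tsum_mul_left]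
  apply tsum_congr
  intro m
  show 1/(2*π) * (x^(2*m) / (2*m).factorial * ∫ θ in (-π)..π, Real.cos θ ^ (2*m)) = _
  rw [cosIntEven]
  have h2pi : (2*π) ≠ 0 := by positivity
  have : ((2*m).factorial : ℝ) ≠ 0 := Nat.cast_ne_zero.2 (2*m).factorial_ne_zero
  field_simp

lemma integral_pow_exp (α : ℝ) (hα : 0 < α) (m : ℕ) :
    ∫ x in Set.Ioi (0:ℝ), x^m * Real.exp (-α * x) = m.factorial / α^(m+1) := by
  have h := integral_rpow_mul_exp_neg_mul_Ioi (a := (m:ℝ)+1) (r := α)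
    (by positivity) hα
  rw [show ((m:ℝ)+1-1) = (m:ℝ) by ring] at h
  have hcongr : ∫ x in Set.Ioi (0:ℝ), x^m * Real.exp (-α * x)
      = ∫ x in Set.Ioi (0:ℝ), x ^ ((m:ℝ)) * Real.exp (-(α * x)) := by
    apply setIntegral_congr_fun measurableSet_Ioi
    intro x hx
    simp [Real.rpow_natCast, neg_mul]
  rw [hcongr, h]
  have hg : Real.Gamma ((m:ℝ)+1) = m.factorial := by
    exact_mod_cast Real.Gamma_nat_eq_factorial m
  have hp : ((1:ℝ)/α) ^ ((m:ℝ)+1) = (1/α)^(m+1) := by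
    rw [show ((m:ℝ)+1) = ((m+1 : ℕ):ℝ) by push_cast; ring, Real.rpow_natCast]
  rw [hg, hp]
  have : α^(m+1) ≠ 0 := by positivity
  field_simp
  rw [← mul_pow, one_div, inv_mul_cancel₀ hα.ne', one_pow]

/-- Laplace-transform identity (Appendix D of the paper):
`∫_0^∞ exp(−αx) · I₀(2√(βx)) dx = (1/α) · exp(β/α)` for all `α > 0` and `β ≥ 0`. -/
theorem stmt8 (α β : ℝ) (hα : 0 < α) (hβ : 0 ≤ β) :
    ∫ x in Set.Ioi (0:ℝ), Real.exp (-α * x) * I0 (2 * Real.sqrt (β * x))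
      = (1 / α) * Real.exp (β / α) := by
  have hfac : ∀ m : ℕ, ((m.factorial : ℝ)) ≠ 0 := fun m => Nat.cast_ne_zero.2 m.factorial_ne_zero
  have hkey : ∀ x ∈ Set.Ioi (0:ℝ), Real.exp (-α * x) * I0 (2 * Real.sqrt (β * x))
      = ∑' m : ℕ, Real.exp (-α * x) * ((β * x)^m / ((m.factorial : ℝ))^2) := by
    intro x hx
    have hbx : 0 ≤ β * x := mul_nonneg hβ (le_of_lt hx)
    rw [I0_eq_tsum, ← tsum_mul_left]
    apply tsum_congr; intro m
    have h1 : (2 * Real.sqrt (β * x))^(2*m) = 4^m * (β * x)^m := by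
      rw [pow_mul]
      have h2 : (2 * Real.sqrt (β * x))^2 = 4 * (β * x) := by
        rw [mul_pow, Real.sq_sqrt hbx]; norm_num
      rw [h2, mul_pow]
    rw [h1]
    have h4 : (4:ℝ)^m ≠ 0 := by positivity
    field_simp
  rw [setIntegral_congr_fun measurableSet_Ioi hkey]
  have hFint : ∀ m : ℕ, Integrable
      (fun x : ℝ => Real.exp (-α * x) * ((β * x)^m / ((m.factorial : ℝ))^2))
      (volume.restrict (Set.Ioi 0)) := by
    intro m
    have base := (integrableOn_rpow_mul_exp_neg_mul_rpow (s := (m:ℝ)) (p := 1)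
      ((by norm_num : (-1:ℝ) < 0).trans_le (Nat.cast_nonneg m)) one_pos hα).const_mul
      (β^m / ((m.factorial : ℝ))^2)
    apply IntegrableOn.congr_fun base _ measurableSet_Ioi
    intro x hx
    have hx0 : (0:ℝ) < x := hx
    dsimp only
    rw [Real.rpow_one, Real.rpow_natCast, mul_pow]
    ring
  have hval : ∀ m : ℕ, (∫ x in Set.Ioi (0:ℝ),
      Real.exp (-α * x) * ((β * x)^m / ((m.factorial : ℝ))^2))
      = 1/α * ((β/α)^m / m.factorial) := by
    intro m
    have heq : ∀ x ∈ Set.Ioi (0:ℝ), Real.exp (-α * x) * ((β * x)^m / ((m.factorial : ℝ))^2)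
        = (β^m / ((m.factorial : ℝ))^2) * (x^m * Real.exp (-α * x)) := by
      intro x hx
      rw [mul_pow]; ring
    rw [setIntegral_congr_fun measurableSet_Ioi heq, integral_const_mul,
      integral_pow_exp α hα m]
    have h1 : α^(m+1) ≠ 0 := by positivity
    have h2 : α^m ≠ 0 := by positivity
    rw [div_pow]
    field_simp
    ring
  have hnorm : ∀ m : ℕ, (∫ x in Set.Ioi (0:ℝ),
      ‖Real.exp (-α * x) * ((β * x)^m / ((m.factorial : ℝ))^2)‖)
      = 1/α * ((β/α)^m / m.factorial) := by
    intro m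
    rw [← hval m]
    apply setIntegral_congr_fun measurableSet_Ioi
    intro x hx
    have hx0 : (0:ℝ) < x := hx
    have hbx : 0 ≤ β * x := mul_nonneg hβ hx0.le
    have : 0 ≤ Real.exp (-α * x) * ((β * x)^m / ((m.factorial : ℝ))^2) := by positivity
    exact norm_of_nonneg this
  have hsum : Summable (fun m : ℕ => ∫ x in Set.Ioi (0:ℝ),
      ‖Real.exp (-α * x) * ((β * x)^m / ((m.factorial : ℝ))^2)‖) := by
    rw [funext hnorm]
    exact (Real.summable_pow_div_factorial (β/α)).mul_left (1/α)
  rw [← integral_tsum_of_summable_integral_norm hFint hsum]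
  have hexp : Real.exp (β/α) = ∑' n : ℕ, (β/α)^n / n.factorial := by
    rw [Real.exp_eq_exp_ℝ, NormedSpace.exp_eq_tsum_div]
  rw [hexp, ← tsum_mul_left]
  exact tsum_congr hval
end
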